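/- Let 𝒜 = {A₁,…,A_m} be an arrangement of finite cameras with distinct centers. Then for every j, every point of E_j lies in the Euclidean closure of the joint image J_𝒜 in (ℙ²)^m; consequently E_𝒜 is contained in the closure of J_𝒜. (Explicitly: for p = (e_{1j},…,p_j,…,e_{mj}) ∈ E_j, the curve v(s) = (s·G_j⁻¹p_j, 0) + c_j satisfies φ_𝒜(v(s)) → p as s → 0.) -/

import Mathlib

open Matrix

noncomputable section

/-- Left 3x3 block `G` of a 3x4 camera matrix `A = [G | t]`. -/
def leftBlock (A : Matrix (Fin 3) (Fin 4) ℝ) : Matrix (Fin 3) (Fin 3) ℝ :=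
  Matrix.of fun i j => A i j.castSucc

/-- Last column `t` of a 3x4 camera matrix `A = [G | t]`. -/
def tCol (A : Matrix (Fin 3) (Fin 4) ℝ) : Fin 3 → ℝ := fun i => A i 3

/-- A camera is finite if its left 3x3 block is invertible. -/
def FiniteCam (A : Matrix (Fin 3) (Fin 4) ℝ) : Prop := (leftBlock A).det ≠ 0

/-- The center `(-G⁻¹ t, 1)` of a finite camera. -/
def camCenter (A : Matrix (Fin 3) (Fin 4) ℝ) : Fin 4 → ℝ :=
  Fin.snoc (-((leftBlock A)⁻¹ *ᵥ tCol A)) 1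

/-- The principal ray `det G • (third row of A)`. -/
def principalRay (A : Matrix (Fin 3) (Fin 4) ℝ) : Fin 4 → ℝ :=
  (leftBlock A).det • A 2

/-- `n_∞ = (0,0,0,1)`. -/
def nInf : Fin 4 → ℝ := Fin.snoc (0 : Fin 3 → ℝ) 1

/-- The chiral domain `D_𝒜`: the closure, within `ℝ⁴ ∖ {0}` (i.e. ambient closure
intersected with `ℝ⁴ ∖ {0}`), of the set of finite vectors (last coordinate nonzero)
having positive depth in every camera of the arrangement. -/
def chiralDomain {m : ℕ} (A : Fin m → Matrix (Fin 3) (Fin 4) ℝ) : Set (Fin 4 → ℝ) :=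
  closure {q : Fin 4 → ℝ | nInf ⬝ᵥ q ≠ 0 ∧ ∀ i, 0 < (principalRay (A i) ⬝ᵥ q) * (nInf ⬝ᵥ q)}
    ∩ {q : Fin 4 → ℝ | q ≠ 0}

/-- The joint image `J_𝒜` (at the level of representatives): tuples of nonzero vectors
representing `(A₁ q, …, A_m q)` for some `q ∈ ℙ³` that is not a camera center. -/
def jointImage {m : ℕ} (A : Fin m → Matrix (Fin 3) (Fin 4) ℝ) :
    Set (Fin m → Fin 3 → ℝ) :=
  {p | (∀ i, p i ≠ 0) ∧
    ∃ q : Fin 4 → ℝ, q ≠ 0 ∧ ∀ i, ∃ c : ℝ, c ≠ 0 ∧ p i = c • (A i *ᵥ q)}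

/-- The chiral joint image `X_𝒜 = φ_𝒜(D_𝒜)` (at the level of representatives). -/
def chiralJointImage {m : ℕ} (A : Fin m → Matrix (Fin 3) (Fin 4) ℝ) :
    Set (Fin m → Fin 3 → ℝ) :=
  {p | (∀ i, p i ≠ 0) ∧
    ∃ q ∈ chiralDomain A, ∀ i, ∃ c : ℝ, c ≠ 0 ∧ p i = c • (A i *ᵥ q)}

/-- `a_i = G_i⁻¹ p_i`. -/
def aVec (A : Matrix (Fin 3) (Fin 4) ℝ) (p : Fin 3 → ℝ) : Fin 3 → ℝ :=
  (leftBlock A)⁻¹ *ᵥ p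

/-- `b_ij = G_i⁻¹ t_i - G_j⁻¹ t_j`. -/
def bVec (A B : Matrix (Fin 3) (Fin 4) ℝ) : Fin 3 → ℝ :=
  (leftBlock A)⁻¹ *ᵥ tCol A - (leftBlock B)⁻¹ *ᵥ tCol B

/-- The chirality constraint set `C_𝒜`, cut out by the biquadratic inequalities
`det(G_i)·p_{i3}·((a_i × a_j)ᵀ(b_ij × a_j)) ≥ 0` and
`det(G_i)·det(G_j)·p_{i3}·p_{j3}·((b_ij × a_i)ᵀ(b_ij × a_j)) ≥ 0` for all `i, j`. -/
def CSet {m : ℕ} (A : Fin m → Matrix (Fin 3) (Fin 4) ℝ) :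
    Set (Fin m → Fin 3 → ℝ) :=
  {p | ∀ i j,
    0 ≤ (leftBlock (A i)).det * p i 2 *
        ((aVec (A i) (p i) ⨯₃ aVec (A j) (p j)) ⬝ᵥ (bVec (A i) (A j) ⨯₃ aVec (A j) (p j))) ∧
    0 ≤ (leftBlock (A i)).det * (leftBlock (A j)).det * p i 2 * p j 2 *
        ((bVec (A i) (A j) ⨯₃ aVec (A i) (p i)) ⬝ᵥ (bVec (A i) (A j) ⨯₃ aVec (A j) (p j)))}

/-- `E_j`: tuples whose `i`-th coordinate, for `i ≠ j`, represents the epipole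
`e_ij = A_i c_j`, with free `j`-th coordinate. -/
def Eset {m : ℕ} (A : Fin m → Matrix (Fin 3) (Fin 4) ℝ) (j : Fin m) :
    Set (Fin m → Fin 3 → ℝ) :=
  {p | (∀ i, p i ≠ 0) ∧ ∀ i, i ≠ j → ∃ c : ℝ, c ≠ 0 ∧ p i = c • (A i *ᵥ camCenter (A j))}


lemma mulVec_snoc' (A : Matrix (Fin 3) (Fin 4) ℝ) (x : Fin 3 → ℝ) :
    A *ᵥ Fin.snoc x 1 = leftBlock A *ᵥ x + tCol A := by
  funext i
  simp [Matrix.mulVec, dotProduct, Fin.sum_univ_castSucc, leftBlock, tCol]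
  congr 1
  rw [show (3 : Fin 4) = Fin.last 3 from rfl, Fin.snoc_last, mul_one]

lemma camCenter_apply (A : Matrix (Fin 3) (Fin 4) ℝ) (hA : FiniteCam A) :
    A *ᵥ camCenter A = 0 := by
  rw [camCenter, mulVec_snoc']
  have h1 : leftBlock A *ᵥ (-((leftBlock A)⁻¹ *ᵥ tCol A)) = -(tCol A) := by
    rw [Matrix.mulVec_neg, Matrix.mulVec_mulVec, Matrix.mul_nonsing_inv _ (isUnit_iff_ne_zero.mpr hA),
      Matrix.one_mulVec]
  rw [h1]; abel

/-- For an arrangement of finite cameras with distinct centers, every point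
of every `E_j` lies in the Euclidean closure of the joint image in `(ℙ²)^m` (expressed at
the level of representatives: elements of `E_j` are tuples of nonzero vectors, and they
lie in the closure of the set of representatives of the joint image). -/
theorem Eset_subset_closure_jointImage {m : ℕ}
    (A : Fin m → Matrix (Fin 3) (Fin 4) ℝ)
    (hfin : ∀ i, FiniteCam (A i))
    (hdist : ∀ i j, i ≠ j → camCenter (A i) ≠ camCenter (A j)) :
    (∀ j, Eset A j ⊆ closure (jointImage A)) ∧
      (⋃ j, Eset A j) ⊆ closure (jointImage A) := by
  have main : ∀ j, Eset A j ⊆ closure (jointImage A) := by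
    intro j p hp
    obtain ⟨hpne, hep⟩ := hp
    choose c hc hcp using hep
    set G := leftBlock (A j) with hG
    set a : Fin 3 → ℝ := G⁻¹ *ᵥ p j with ha
    set v : ℝ → Fin 4 → ℝ :=
      fun s => Fin.snoc (s • a + (-(G⁻¹ *ᵥ tCol (A j)))) 1 with hv
    have key : ∀ s i, A i *ᵥ v s
        = s • (leftBlock (A i) *ᵥ a) + A i *ᵥ camCenter (A j) := by
      intro s i
      rw [hv, mulVec_snoc', camCenter, mulVec_snoc', Matrix.mulVec_add,
        Matrix.mulVec_smul]
      abel
    have hGa : G *ᵥ a = p j := by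
      rw [ha, Matrix.mulVec_mulVec, Matrix.mul_nonsing_inv _ (isUnit_iff_ne_zero.mpr (hfin j)),
        Matrix.one_mulVec]
    have hAj : ∀ s, A j *ᵥ v s = s • p j := by
      intro s
      rw [key s j, camCenter_apply (A j) (hfin j), ← hG, hGa]
      simp
    set f : ℝ → Fin m → Fin 3 → ℝ :=
      fun s i => if h : i = j then p j
        else p i + (s * c i h) • (leftBlock (A i) *ᵥ a) with hf
    have hf0 : f 0 = p := by
      funext i
      by_cases h : i = j
      · subst h; simp [hf]
      · simp [hf, h]
    have hcont : ∀ i, Continuous fun s => f s i := by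
      intro i
      by_cases h : i = j
      · subst h; simpa [hf] using continuous_const
      · simp only [hf, dif_neg h]
        fun_prop
    have hcontf : Continuous f := continuous_pi hcont
    have htend : Filter.Tendsto f (nhdsWithin 0 {(0:ℝ)}ᶜ) (nhds p) := by
      have := (hcontf.tendsto 0).mono_left (nhdsWithin_le_nhds (s := {(0:ℝ)}ᶜ))
      rwa [hf0] at this
    have hevne : ∀ᶠ s in nhdsWithin 0 {(0:ℝ)}ᶜ, ∀ i, f s i ≠ 0 := by
      apply Filter.eventually_all.2
      intro i
      apply Filter.Eventually.filter_mono nhdsWithin_le_nhds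
      have : Filter.Tendsto (fun s => f s i) (nhds 0) (nhds (p i)) := by
        have := (hcont i).tendsto 0
        rwa [hf0] at this
      exact this.eventually_ne (hpne i)
    have hev : ∀ᶠ s in nhdsWithin 0 {(0:ℝ)}ᶜ, f s ∈ jointImage A := by
      filter_upwards [hevne, self_mem_nhdsWithin] with s hs hs0
      refine ⟨hs, v s, ?_, ?_⟩
      · intro hcontra
        have := congrFun hcontra (Fin.last 3)
        simp only [hv, Fin.snoc_last] at this
        simp at this
      · intro i
        by_cases h : i = j
        · subst h
          refine ⟨1/s, by simpa using hs0, ?_⟩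
          simp only [hf, dif_pos]
          rw [hAj s, smul_smul, one_div, inv_mul_cancel₀ hs0, one_smul]
        · refine ⟨c i h, hc i h, ?_⟩
          simp only [hf, dif_neg h]
          rw [key s i, smul_add, smul_smul, ← hcp i h,
            mul_comm (c i h) s, add_comm]
    exact mem_closure_of_tendsto htend hev
  exact ⟨main, Set.iUnion_subset main⟩
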